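/- Define f(x) = √(1−x) for x < 1 and f(x) = 1 for x ≥ 1. Then the function c(t) = t − t²/4 for t ≤ 2 and c(t) = c(2) + (t−2) = 1 + (t−2) for t ≥ 2 is the unique solution of the initial value problem c'₊ = f∘c, c(0) = 0, but the functional inequality ∫ₛᵗ f₋(c̃(r)) dr ≤ c̃(t) − c̃(s) ≤ ∫ₛᵗ f(c̃(r)) dr (for all s ≤ t) with c̃(0)=0 and c̃ non-decreasing admits at least two solutions: c itself and c̃(t) = min(c(t), 1). -/

import Mathlib

open Set MeasureTheory Filter

/-- `f(x) = √(1−x)` for `x < 1`, `f(x) = 1` for `x ≥ 1`. -/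
noncomputable def fEx : ℝ → ℝ := fun x => if x < 1 then Real.sqrt (1 - x) else 1

/-- The left-limit function of `fEx` (it has a single positive jump at `1`). -/
noncomputable def fExm : ℝ → ℝ := fun x => if x ≤ 1 then Real.sqrt (1 - x) else 1

/-- The unique solution of the IVP `c'₊ = fEx ∘ c`, `c(0) = 0`. -/
noncomputable def cEx : ℝ → ℝ := fun t => if t ≤ 2 then t - t ^ 2 / 4 else 1 + (t - 2)

/-- The second solution of the functional inequality: `c̃ = min(c, 1)`. -/
noncomputable def ctEx : ℝ → ℝ := fun t => min (cEx t) 1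

lemma cEx_le (t : ℝ) (h : t ≤ 2) : cEx t = t - t ^ 2 / 4 := if_pos h
lemma cEx_ge (t : ℝ) (h : 2 ≤ t) : cEx t = t - 1 := by
  rcases eq_or_lt_of_le h with h'|h'
  · simp [cEx, ← h']; norm_num
  · simp [cEx, not_le.2 h', (not_le.2 h')]; ring

lemma one_sub_cEx (t : ℝ) (h : t ≤ 2) : 1 - cEx t = (1 - t/2)^2 := by
  rw [cEx_le t h]; ring

lemma cEx_lt_one (t : ℝ) (h : t < 2) : cEx t < 1 := by
  have := one_sub_cEx t h.le
  nlinarith [sq_nonneg (1 - t/2)]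

lemma fEx_cEx (t : ℝ) : fEx (cEx t) = if t < 2 then 1 - t/2 else 1 := by
  rcases lt_or_ge t 2 with h|h
  · rw [if_pos h, fEx, if_pos (cEx_lt_one t h), one_sub_cEx t h.le,
      Real.sqrt_sq (by linarith)]
  · rw [if_neg (not_lt.2 h), fEx, cEx_ge t h]
    rw [if_neg (by push_neg; linarith)]

lemma fExm_cEx (t : ℝ) : fExm (cEx t) = if t ≤ 2 then 1 - t/2 else 1 := by
  rcases le_or_gt t 2 with h|h
  · rw [if_pos h, fExm, if_pos (by nlinarith [one_sub_cEx t h] : cEx t ≤ 1),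
      one_sub_cEx t h, Real.sqrt_sq (by linarith)]
  · rw [if_neg (not_le.2 h), fExm, cEx_ge t h.le, if_neg (by push_neg; linarith)]

lemma cEx_hasDeriv (t : ℝ) : HasDerivWithinAt cEx (fEx (cEx t)) (Ici t) t := by
  rcases lt_or_ge t 2 with h|h
  · rw [fEx_cEx, if_pos h]
    have h1 : HasDerivAt (fun x : ℝ => x - x ^ 2 / 4) (1 - t/2) t := by
      have := ((hasDerivAt_id t).sub (((hasDerivAt_pow 2 t)).div_const 4))
      convert this using 1 <;> first | rfl | (norm_num; ring) | norm_num
    have h2 : cEx =ᶠ[nhds t] fun x : ℝ => x - x ^ 2 / 4 := by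
      filter_upwards [Iio_mem_nhds h] with x hx
      exact cEx_le x (le_of_lt hx)
    exact ((h1.congr_of_eventuallyEq h2)).hasDerivWithinAt
  · rw [fEx_cEx, if_neg (not_lt.2 h)]
    have h1 : HasDerivWithinAt (fun x : ℝ => x - 1) 1 (Ici t) t := by
      simpa using ((hasDerivAt_id t).sub_const 1).hasDerivWithinAt
    exact h1.congr (fun x hx => cEx_ge x (le_trans h hx)) (cEx_ge t h)

noncomputable def gEx : ℝ → ℝ := fun x => if x ≤ 1 then 2 - 2 * Real.sqrt (1 - x) else 1 + x

lemma gEx_cont : Continuous gEx := by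
  unfold gEx
  apply Continuous.if_le
  · fun_prop
  · fun_prop
  · exact continuous_id
  · exact continuous_const
  · intro x hx; subst hx; norm_num

lemma gEx_mono : StrictMono gEx := by
  intro x y hxy
  unfold gEx
  rcases le_or_gt x 1 with hx|hx
  · rcases le_or_gt y 1 with hy|hy
    · rw [if_pos hx, if_pos hy]
      have : Real.sqrt (1 - y) < Real.sqrt (1 - x) :=
        Real.sqrt_lt_sqrt (by linarith) (by linarith)
      linarith
    · rw [if_pos hx, if_neg (not_le.2 hy)]
      have := Real.sqrt_nonneg (1 - x)
      linarith
  · rw [if_neg (not_le.2 hx), if_neg (not_le.2 (hx.trans hxy))]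
    linarith

lemma gEx_cEx (t : ℝ) : gEx (cEx t) = t := by
  rcases le_or_gt t 2 with h|h
  · rw [gEx, if_pos (by nlinarith [one_sub_cEx t h] : cEx t ≤ 1), one_sub_cEx t h,
      Real.sqrt_sq (by linarith)]
    ring
  · rw [gEx, cEx_ge t h.le, if_neg (by push_neg; linarith)]
    ring

lemma fEx_nonneg (x : ℝ) : 0 ≤ fEx x := by
  unfold fEx; split
  · exact Real.sqrt_nonneg _
  · norm_num

lemma sol_mono (d : ℝ → ℝ) (hc : ContinuousOn d (Ici 0))
    (hd : ∀ t ≥ (0:ℝ), HasDerivWithinAt d (fEx (d t)) (Ici t) t) :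
    ∀ a b : ℝ, 0 ≤ a → a ≤ b → d a ≤ d b := by
  intro a b ha hab
  have := image_le_of_deriv_right_le_deriv_boundary
    (f := fun _ => d a) (f' := fun _ => 0) (a := a) (b := b)
    continuousOn_const (fun x _ => (hasDerivWithinAt_const x _ _))
    (le_refl (d a))
    (hc.mono (fun x hx => le_trans ha hx.1))
    (fun x hx => hd x (le_trans ha hx.1))
    (fun x _ => fEx_nonneg _)
  exact this (right_mem_Icc.2 hab)

lemma gEx_comp_deriv (d : ℝ → ℝ) (hc : ContinuousOn d (Ici 0))
    (hd : ∀ t ≥ (0:ℝ), HasDerivWithinAt d (fEx (d t)) (Ici t) t) :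
    ∀ t ≥ (0:ℝ), HasDerivWithinAt (fun r => gEx (d r)) 1 (Ici t) t := by
  intro t ht
  rcases lt_trichotomy (d t) 1 with h|h|h
  · -- d t < 1
    have hs : Real.sqrt (1 - d t) ≠ 0 := by
      rw [Real.sqrt_ne_zero']; linarith
    have houter : HasDerivAt (fun x : ℝ => 2 - 2 * Real.sqrt (1 - x))
        (1 / Real.sqrt (1 - d t)) (d t) := by
      have h1 : HasDerivAt (fun x : ℝ => Real.sqrt (1 - x))
          (1 / (2 * Real.sqrt (1 - d t)) * (-1)) (d t) := by
        exact (Real.hasDerivAt_sqrt (by linarith : (1:ℝ) - d t ≠ 0)).comp (d t)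
          (((hasDerivAt_id (d t)).const_sub 1))
      have h2 := (h1.const_mul 2).const_sub 2
      convert h2 using 1
      all_goals first | rfl | field_simp
    have hg : HasDerivAt gEx (1 / Real.sqrt (1 - d t)) (d t) := by
      apply houter.congr_of_eventuallyEq
      filter_upwards [Iio_mem_nhds h] with x hx
      rw [gEx, if_pos (le_of_lt hx)]
    have := hg.comp_hasDerivWithinAt t (hd t ht)
    have hf : fEx (d t) = Real.sqrt (1 - d t) := by rw [fEx, if_pos h]
    rw [hf] at this
    convert this using 1
    all_goals first | rfl | field_simp
  · -- d t = 1
    have houter : HasDerivWithinAt gEx 1 (Ici 1) (d t) := by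
      rw [h]
      have h1 : HasDerivWithinAt (fun x : ℝ => 1 + x) 1 (Ici 1) 1 := by
        simpa using ((hasDerivAt_id (1:ℝ)).const_add 1).hasDerivWithinAt
      apply h1.congr
      · intro x hx
        rcases eq_or_lt_of_le (show (1:ℝ) ≤ x from hx) with h'|h'
        · rw [gEx, ← h']; norm_num
        · rw [gEx, if_neg (not_le.2 h')]
      · rw [gEx]; norm_num
    have hmaps : MapsTo d (Ici t) (Ici 1) := by
      intro x hx
      have := sol_mono d hc hd t x ht hx
      simp only [mem_Ici] at *
      linarith
    have := houter.comp t (hd t ht) hmaps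
    have hf : fEx (d t) = 1 := by rw [fEx, h, if_neg (lt_irrefl 1)]
    rw [hf] at this
    convert this using 1 <;> first | rfl | simp
  · -- d t > 1
    have hg : HasDerivAt gEx 1 (d t) := by
      have h1 : HasDerivAt (fun x : ℝ => 1 + x) 1 (d t) := by
        simpa using (hasDerivAt_id (d t)).const_add 1
      apply h1.congr_of_eventuallyEq
      filter_upwards [Ioi_mem_nhds h] with x hx
      rw [gEx, if_neg (not_le.2 hx)]
    have := hg.comp_hasDerivWithinAt t (hd t ht)
    have hf : fEx (d t) = 1 := by rw [fEx, if_neg (by push_neg; linarith)]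
    rw [hf] at this
    convert this using 1 <;> first | rfl | simp

lemma sol_unique (d : ℝ → ℝ) (hc : ContinuousOn d (Ici 0)) (h0 : d 0 = 0)
    (hd : ∀ t ≥ (0:ℝ), HasDerivWithinAt d (fEx (d t)) (Ici t) t) :
    ∀ t ≥ (0:ℝ), d t = cEx t := by
  intro t ht
  have hH : ContinuousOn (fun r => gEx (d r)) (Ici 0) := gEx_cont.comp_continuousOn hc
  have hH0 : gEx (d 0) = 0 := by rw [h0, gEx]; norm_num
  have hHd := gEx_comp_deriv d hc hd
  have hid : ∀ x : ℝ, HasDerivWithinAt (fun r : ℝ => r) 1 (Ici x) x :=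
    fun x => (hasDerivAt_id x).hasDerivWithinAt
  have h1 : gEx (d t) ≤ t := by
    have := image_le_of_deriv_right_le_deriv_boundary
      (f := fun r => gEx (d r)) (f' := fun _ => 1) (a := 0) (b := t)
      (hH.mono (fun x hx => hx.1)) (fun x hx => hHd x hx.1)
      (by simpa using hH0.le) (continuousOn_id) (fun x _ => hid x) (fun x _ => le_refl 1)
    simpa using this (right_mem_Icc.2 ht)
  have h2 : t ≤ gEx (d t) := by
    have := image_le_of_deriv_right_le_deriv_boundary
      (f := fun r : ℝ => r) (f' := fun _ => 1) (a := 0) (b := t)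
      (continuousOn_id) (fun x _ => hid x)
      (by simp [hH0]) (hH.mono (fun x hx => hx.1)) (fun x hx => hHd x hx.1)
      (fun x _ => le_refl 1)
    simpa using this (right_mem_Icc.2 ht)
  have : gEx (d t) = gEx (cEx t) := by rw [gEx_cEx]; linarith
  exact gEx_mono.injective this

lemma cEx_cont : Continuous cEx := by
  unfold cEx
  apply Continuous.if_le
  · fun_prop
  · fun_prop
  · exact continuous_id
  · exact continuous_const
  · intro x hx; subst hx; norm_num

noncomputable def qEx : ℝ → ℝ := fun r => if r < 2 then 1 - r/2 else 1

lemma qEx_intble {s t : ℝ} (hs : 0 ≤ s) (hst : s ≤ t) :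
    IntervalIntegrable qEx volume s t := by
  rw [intervalIntegrable_iff_integrableOn_Ioc_of_le hst]
  apply Integrable.mono' (g := fun _ => (1:ℝ))
    (integrableOn_const (by simp))
  · apply Measurable.aestronglyMeasurable
    apply Measurable.ite measurableSet_Iio <;> fun_prop
  · filter_upwards [ae_restrict_mem measurableSet_Ioc] with r hr
    have hr0 : 0 ≤ r := le_trans hs hr.1.le
    rw [qEx]
    split <;> rw [Real.norm_eq_abs, abs_le] <;> constructor <;> linarith

lemma qEx_integral {s t : ℝ} (hs : 0 ≤ s) (hst : s ≤ t) :
    ∫ r in s..t, qEx r = cEx t - cEx s := by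
  apply intervalIntegral.integral_eq_sub_of_hasDeriv_right_of_le hst
    cEx_cont.continuousOn _ (qEx_intble hs hst)
  intro x _
  rw [qEx, ← fEx_cEx]
  exact (cEx_hasDeriv x).mono Ioi_subset_Ici_self

lemma ae_ne_two : ∀ᵐ r : ℝ, r ≠ 2 := by
  rw [MeasureTheory.ae_iff]
  convert Real.volume_singleton (a := 2) using 2
  ext r; simp

lemma cEx_hasDerivAt {x : ℝ} (h : x < 2) : HasDerivAt cEx (1 - x/2) x := by
  have h1 : HasDerivAt (fun y : ℝ => y - y ^ 2 / 4) (1 - x/2) x := by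
    have := ((hasDerivAt_id x).sub (((hasDerivAt_pow 2 x)).div_const 4))
    convert this using 1 <;> first | rfl | (norm_num; ring) | norm_num
  apply h1.congr_of_eventuallyEq
  filter_upwards [Iio_mem_nhds h] with y hy
  exact cEx_le y (le_of_lt hy)

lemma ctEx_le {r : ℝ} (h : r ≤ 2) : ctEx r = cEx r :=
  min_eq_left (by nlinarith [one_sub_cEx r h, sq_nonneg (1 - r/2)])

lemma ctEx_ge {r : ℝ} (h : 2 ≤ r) : ctEx r = 1 :=
  min_eq_right (by rw [cEx_ge r h]; linarith)

noncomputable def hEx : ℝ → ℝ := fun r => max (1 - r/2) 0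

lemma fExm_ctEx (r : ℝ) : fExm (ctEx r) = hEx r := by
  rcases le_or_gt r 2 with h|h
  · rw [ctEx_le h, fExm, if_pos (by nlinarith [one_sub_cEx r h] : cEx r ≤ 1),
      one_sub_cEx r h, Real.sqrt_sq (by linarith), hEx, max_eq_left (by linarith)]
  · rw [ctEx_ge h.le, fExm, if_pos le_rfl, hEx, max_eq_right (by linarith)]
    simp

lemma fEx_ctEx (r : ℝ) : fEx (ctEx r) = qEx r := by
  rcases lt_or_ge r 2 with h|h
  · rw [ctEx_le h.le, fEx, if_pos (cEx_lt_one r h), one_sub_cEx r h.le,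
      Real.sqrt_sq (by linarith), qEx, if_pos h]
  · rw [ctEx_ge h, fEx, if_neg (lt_irrefl 1), qEx, if_neg (not_lt.2 h)]

lemma ctEx_deriv (x : ℝ) : HasDerivWithinAt ctEx (hEx x) (Ioi x) x := by
  rcases lt_or_ge x 2 with h|h
  · have h1 : HasDerivAt ctEx (1 - x/2) x := by
      apply (cEx_hasDerivAt h).congr_of_eventuallyEq
      filter_upwards [Iio_mem_nhds h] with y hy
      exact ctEx_le (le_of_lt hy)
    rw [hEx, max_eq_left (by linarith)]
    exact h1.hasDerivWithinAt
  · rw [hEx, max_eq_right (by linarith)]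
    apply (hasDerivWithinAt_const x (Ioi x) (1:ℝ)).congr
    · intro y hy
      exact ctEx_ge (le_trans h (le_of_lt hy))
    · exact ctEx_ge h

lemma hEx_cont : Continuous hEx := by unfold hEx; fun_prop

lemma hEx_integral {s t : ℝ} (hst : s ≤ t) :
    ∫ r in s..t, hEx r = ctEx t - ctEx s := by
  apply intervalIntegral.integral_eq_sub_of_hasDeriv_right_of_le hst
    (cEx_cont.min continuous_const).continuousOn
    (fun x _ => ctEx_deriv x) (hEx_cont.intervalIntegrable s t)

lemma fEx_cEx_q (r : ℝ) : fEx (cEx r) = qEx r := fEx_cEx r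

lemma cEx0 : cEx 0 = 0 := by rw [cEx_le 0 (by norm_num)]; norm_num

lemma fExm_cEx_ae {s t : ℝ} :
    ∫ r in s..t, fExm (cEx r) = ∫ r in s..t, qEx r := by
  apply intervalIntegral.integral_congr_ae
  filter_upwards [ae_ne_two] with r h2 _
  rw [fExm_cEx, qEx]
  rcases lt_trichotomy r 2 with h|h|h
  · rw [if_pos h.le, if_pos h]
  · exact absurd h h2
  · rw [if_neg (not_le.2 h), if_neg (not_lt.2 h.le)]

/-- `cEx` is the unique solution of the IVP `c'₊ = f ∘ c`, `c(0)=0`,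
but the two-sided functional inequality
`∫ₛᵗ f₋(c̃(r)) dr ≤ c̃(t) − c̃(s) ≤ ∫ₛᵗ f(c̃(r)) dr` with `c̃` non-decreasing,
`c̃(0) = 0`, admits (at least) the two distinct solutions `cEx` and `ctEx`. -/
theorem ivp_unique_but_inequality_not :
    -- cEx solves the IVP
    (cEx 0 = 0 ∧ ∀ t ≥ (0:ℝ), HasDerivWithinAt cEx (fEx (cEx t)) (Ici t) t) ∧
    -- and it is the unique solution of the IVP
    (∀ d : ℝ → ℝ, ContinuousOn d (Ici 0) → d 0 = 0 →
      (∀ t ≥ (0:ℝ), HasDerivWithinAt d (fEx (d t)) (Ici t) t) →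
      ∀ t ≥ (0:ℝ), d t = cEx t) ∧
    -- cEx is a non-decreasing solution of the functional inequality
    (cEx 0 = 0 ∧ (∀ s t, (0:ℝ) ≤ s → s ≤ t → cEx s ≤ cEx t) ∧
      ∀ s t, (0:ℝ) ≤ s → s ≤ t →
        (∫ r in s..t, fExm (cEx r)) ≤ cEx t - cEx s ∧
        cEx t - cEx s ≤ ∫ r in s..t, fEx (cEx r)) ∧
    -- ctEx is another non-decreasing solution of the functional inequality
    (ctEx 0 = 0 ∧ (∀ s t, (0:ℝ) ≤ s → s ≤ t → ctEx s ≤ ctEx t) ∧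
      ∀ s t, (0:ℝ) ≤ s → s ≤ t →
        (∫ r in s..t, fExm (ctEx r)) ≤ ctEx t - ctEx s ∧
        ctEx t - ctEx s ≤ ∫ r in s..t, fEx (ctEx r)) ∧
    -- and the two solutions differ
    (∃ t ≥ (0:ℝ), cEx t ≠ ctEx t) := by
  have cmono := sol_mono cEx cEx_cont.continuousOn (fun t _ => cEx_hasDeriv t)
  refine ⟨⟨cEx0, fun t _ => cEx_hasDeriv t⟩, sol_unique, ⟨cEx0, cmono, ?_⟩,
    ⟨by rw [ctEx_le (by norm_num : (0:ℝ) ≤ 2), cEx0],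
     fun s t hs hst => min_le_min (cmono s t hs hst) le_rfl, ?_⟩, 3, by norm_num,
     by rw [cEx_ge 3 (by norm_num), ctEx_ge (by norm_num : (2:ℝ) ≤ 3)]; norm_num⟩
  · intro s t hs hst
    have e1 : ∫ r in s..t, fEx (cEx r) = cEx t - cEx s := by
      rw [intervalIntegral.integral_congr (fun r _ => fEx_cEx_q r), qEx_integral hs hst]
    have e2 : ∫ r in s..t, fExm (cEx r) = cEx t - cEx s := by
      rw [fExm_cEx_ae, qEx_integral hs hst]
    exact ⟨le_of_eq e2, le_of_eq e1.symm⟩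
  · intro s t hs hst
    have e2 : ∫ r in s..t, fExm (ctEx r) = ctEx t - ctEx s := by
      rw [intervalIntegral.integral_congr (fun r _ => fExm_ctEx r), hEx_integral hst]
    refine ⟨le_of_eq e2, ?_⟩
    rw [intervalIntegral.integral_congr (fun r _ => fEx_ctEx r), ← hEx_integral hst]
    apply intervalIntegral.integral_mono_on hst (hEx_cont.intervalIntegrable s t)
      (qEx_intble hs hst)
    intro r hr
    rcases lt_or_ge r 2 with h|h
    · rw [hEx, qEx, if_pos h, max_eq_left (by linarith)]
    · rw [hEx, qEx, if_neg (not_lt.2 h), max_eq_right (by linarith)]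
      norm_num
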